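/- If ψ(k) → ψ in Ψ and s(k) ∈ C(ψ(k)) for each k, where C is the correspondence of the paper, then the sequence {s(k)} is eventually contained in a fixed compact subset M of R², and every limit point s̄ of {s(k)} satisfies s̄ ∈ C(ψ); consequently C has closed graph on Ψ. -/
import Mathlib


open Set

/-- `d0(ψ) = [(1-α)Σ0 + α(1-α)(μ0-ν0)²]/α`. -/
noncomputable def d0 (S0 μ0 ν0 α : ℝ) : ℝ :=
  ((1 - α) * S0 + α * (1 - α) * (μ0 - ν0) ^ 2) / α

/-- `d1(ψ) = [(1-α)Σ1 + α(1-α)(μ1-ν1)²]/α`. -/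
noncomputable def d1 (S1 μ1 ν1 α : ℝ) : ℝ :=
  ((1 - α) * S1 + α * (1 - α) * (μ1 - ν1) ^ 2) / α

/-- The parameter set `Ψ = {(ν0,ν1,α) : α[(ν0-μ0)² + (ν1-μ1)²] ≤ δ, 0 < α < 1}`,
with `ψ = (ν0, ν1, α)`. -/
def PsiSet (μ0 μ1 δ : ℝ) : Set (ℝ × ℝ × ℝ) :=
  {ψ | ψ.2.2 * ((ψ.1 - μ0) ^ 2 + (ψ.2.1 - μ1) ^ 2) ≤ δ ∧ 0 < ψ.2.2 ∧ ψ.2.2 < 1}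

/-- The correspondence `C : Ψ ⇉ ℝ²` of the paper, with `ψ = (ν0, ν1, α)` and
`s = (Γ̃0, Γ̃1)`. -/
noncomputable def corr (S0 S1 δ μ0 μ1 : ℝ) (ψ : ℝ × ℝ × ℝ) : Set (ℝ × ℝ) :=
  {s : ℝ × ℝ |
    (S0 + d0 S0 μ0 ψ.1 ψ.2.2) * s.2 ≤ s.1 ∧
    s.1 ≤ (δ / ψ.2.2 - (ψ.1 - μ0) ^ 2 - (ψ.2.1 - μ1) ^ 2 + S0 + S1
            + d0 S0 μ0 ψ.1 ψ.2.2 + d1 S1 μ1 ψ.2.1 ψ.2.2) * s.2 - 1 ∧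
    s.2 ≤ 1 / (S1 + d1 S1 μ1 ψ.2.1 ψ.2.2)}

open Filter

lemma d0_nonneg' (S0 μ0 ν0 α : ℝ) (hS0 : 0 ≤ S0) (h0 : 0 < α) (h1 : α < 1) :
    0 ≤ d0 S0 μ0 ν0 α := by
  unfold d0
  apply div_nonneg _ h0.le
  have h2 := mul_nonneg (sub_nonneg.2 h1.le) hS0
  have h3 := mul_nonneg (mul_nonneg h0.le (sub_nonneg.2 h1.le)) (sq_nonneg (μ0 - ν0))
  linarith

lemma d1_nonneg' (S1 μ1 ν1 α : ℝ) (hS1 : 0 ≤ S1) (h0 : 0 < α) (h1 : α < 1) :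
    0 ≤ d1 S1 μ1 ν1 α :=
  d0_nonneg' S1 μ1 ν1 α hS1 h0 h1

lemma contAt_d0 (S0 μ0 : ℝ) (ψ : ℝ × ℝ × ℝ) (hα : ψ.2.2 ≠ 0) :
    ContinuousAt (fun p : ℝ × ℝ × ℝ => d0 S0 μ0 p.1 p.2.2) ψ := by
  unfold d0
  exact ContinuousAt.div (by fun_prop) (by fun_prop) hα

lemma contAt_d1 (S1 μ1 : ℝ) (ψ : ℝ × ℝ × ℝ) (hα : ψ.2.2 ≠ 0) :
    ContinuousAt (fun p : ℝ × ℝ × ℝ => d1 S1 μ1 p.2.1 p.2.2) ψ := by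
  unfold d1
  exact ContinuousAt.div (by fun_prop) (by fun_prop) hα

lemma key_lemma (S0 S1 δ μ0 μ1 : ℝ) (hS0 : 0 < S0) (hS1 : 0 < S1)
    (ψseq : ℕ → ℝ × ℝ × ℝ) (ψ : ℝ × ℝ × ℝ) (s : ℕ → ℝ × ℝ)
    (hψmem : ∀ k, ψseq k ∈ PsiSet μ0 μ1 δ) (hψ : ψ ∈ PsiSet μ0 μ1 δ)
    (hlim : Tendsto ψseq atTop (nhds ψ))
    (hs : ∀ k, s k ∈ corr S0 S1 δ μ0 μ1 (ψseq k))
    (sbar : ℝ × ℝ) (hsb : Tendsto s atTop (nhds sbar)) :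
    sbar ∈ corr S0 S1 δ μ0 μ1 ψ := by
  have hα : 0 < ψ.2.2 := hψ.2.1
  have tν0 : Tendsto (fun k => (ψseq k).1) atTop (nhds ψ.1) :=
    (continuous_fst.tendsto ψ).comp hlim
  have tν1 : Tendsto (fun k => (ψseq k).2.1) atTop (nhds ψ.2.1) :=
    ((continuous_fst.comp continuous_snd).tendsto ψ).comp hlim
  have tα : Tendsto (fun k => (ψseq k).2.2) atTop (nhds ψ.2.2) :=
    ((continuous_snd.comp continuous_snd).tendsto ψ).comp hlim
  have td0 : Tendsto (fun k => d0 S0 μ0 (ψseq k).1 (ψseq k).2.2) atTop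
      (nhds (d0 S0 μ0 ψ.1 ψ.2.2)) :=
    ((contAt_d0 S0 μ0 ψ hα.ne').tendsto).comp hlim
  have td1 : Tendsto (fun k => d1 S1 μ1 (ψseq k).2.1 (ψseq k).2.2) atTop
      (nhds (d1 S1 μ1 ψ.2.1 ψ.2.2)) :=
    ((contAt_d1 S1 μ1 ψ hα.ne').tendsto).comp hlim
  have ts1 : Tendsto (fun k => (s k).1) atTop (nhds sbar.1) :=
    (continuous_fst.tendsto sbar).comp hsb
  have ts2 : Tendsto (fun k => (s k).2) atTop (nhds sbar.2) :=
    (continuous_snd.tendsto sbar).comp hsb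
  have hd1nn : 0 ≤ d1 S1 μ1 ψ.2.1 ψ.2.2 := d1_nonneg' _ _ _ _ hS1.le hα hψ.2.2
  refine ⟨?_, ?_, ?_⟩
  · exact le_of_tendsto_of_tendsto' ((tendsto_const_nhds.add td0).mul ts2) ts1
      (fun k => (hs k).1)
  · refine le_of_tendsto_of_tendsto' ts1 ?_ (fun k => (hs k).2.1)
    exact ((((((((tendsto_const_nhds.div tα hα.ne').sub
      ((tν0.sub tendsto_const_nhds).pow 2)).sub
      ((tν1.sub tendsto_const_nhds).pow 2)).add tendsto_const_nhds).add
      tendsto_const_nhds).add td0).add td1).mul ts2).sub tendsto_const_nhds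
  · refine le_of_tendsto_of_tendsto' ts2 ?_ (fun k => (hs k).2.2)
    exact tendsto_const_nhds.div (tendsto_const_nhds.add td1) (by positivity)

/-- If `ψ(k) → ψ` in `Ψ` and `s(k) ∈ C(ψ(k))`, then `{s(k)}` is eventually contained
in a fixed compact set `M`, every cluster point of `{s(k)}` lies in `C(ψ)`, and
consequently `C` has closed graph on `Ψ`. -/
theorem stmt_16 (S0 S1 δ μ0 μ1 : ℝ) (hS0 : 0 < S0) (hS1 : 0 < S1) (hδ : 0 < δ)
    (ψseq : ℕ → ℝ × ℝ × ℝ) (ψ : ℝ × ℝ × ℝ) (s : ℕ → ℝ × ℝ)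
    (hψmem : ∀ k, ψseq k ∈ PsiSet μ0 μ1 δ) (hψ : ψ ∈ PsiSet μ0 μ1 δ)
    (hlim : Tendsto ψseq atTop (nhds ψ))
    (hs : ∀ k, s k ∈ corr S0 S1 δ μ0 μ1 (ψseq k)) :
    (∃ M : Set (ℝ × ℝ), IsCompact M ∧ ∀ᶠ k in atTop, s k ∈ M)
    ∧ (∀ sbar : ℝ × ℝ, MapClusterPt sbar atTop s → sbar ∈ corr S0 S1 δ μ0 μ1 ψ)
    ∧ IsClosed {p : {x // x ∈ PsiSet μ0 μ1 δ} × (ℝ × ℝ) |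
        p.2 ∈ corr S0 S1 δ μ0 μ1 p.1.val} := by
  refine ⟨?_, ?_, ?_⟩
  · -- eventual containment in a compact set
    have hα : 0 < ψ.2.2 := hψ.2.1
    set big : (ℝ × ℝ × ℝ) → ℝ := fun p =>
      δ / p.2.2 - (p.1 - μ0) ^ 2 - (p.2.1 - μ1) ^ 2 + S0 + S1
        + d0 S0 μ0 p.1 p.2.2 + d1 S1 μ1 p.2.1 p.2.2 with hbig
    have tbig : Tendsto (fun k => big (ψseq k)) atTop (nhds (big ψ)) := by
      have : ContinuousAt big ψ := by
        apply ContinuousAt.add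
        apply ContinuousAt.add
        · apply ContinuousAt.add
          · fun_prop (disch := exact hα.ne')
          · exact continuousAt_const
        · exact contAt_d0 S0 μ0 ψ hα.ne'
        · exact contAt_d1 S1 μ1 ψ hα.ne'
      exact this.tendsto.comp hlim
    set B : ℝ := big ψ + 1 with hB
    have hev : ∀ᶠ k in atTop, big (ψseq k) ≤ B :=
      tbig.eventually (eventually_le_nhds (by linarith))
    refine ⟨Icc 0 (B / S1) ×ˢ Icc (0 : ℝ) (1 / S1),
      isCompact_Icc.prod isCompact_Icc, ?_⟩
    filter_upwards [hev] with k hk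
    obtain ⟨hcon, h0k, h1k⟩ := hψmem k
    obtain ⟨hi1, hi2, hi3⟩ := hs k
    have hd0k : 0 ≤ d0 S0 μ0 (ψseq k).1 (ψseq k).2.2 := d0_nonneg' _ _ _ _ hS0.le h0k h1k
    have hd1k : 0 ≤ d1 S1 μ1 (ψseq k).2.1 (ψseq k).2.2 := d1_nonneg' _ _ _ _ hS1.le h0k h1k
    have hsq : ((ψseq k).1 - μ0) ^ 2 + ((ψseq k).2.1 - μ1) ^ 2 ≤ δ / (ψseq k).2.2 := by
      rw [le_div_iff₀ h0k, mul_comm]; exact hcon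
    have hi2' : (s k).1 ≤ big (ψseq k) * (s k).2 - 1 := hi2
    have hcpos : 0 < big (ψseq k) - (S0 + d0 S0 μ0 (ψseq k).1 (ψseq k).2.2) := by
      simp only [hbig]; linarith
    have hs2pos : 0 < (s k).2 := by
      by_contra h
      push_neg at h
      nlinarith [mul_nonpos_of_nonneg_of_nonpos hcpos.le h]
    have hs2le : (s k).2 ≤ 1 / S1 :=
      hi3.trans (one_div_le_one_div_of_le hS1 (by linarith))
    have hbigpos : 0 < big (ψseq k) := by simp only [hbig]; linarith
    have hBpos : 0 < B := lt_of_lt_of_le hbigpos hk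
    have hmul : big (ψseq k) * (s k).2 ≤ B * (1 / S1) :=
      mul_le_mul hk hs2le hs2pos.le hBpos.le
    have hBeq : B * (1 / S1) = B / S1 := by ring
    constructor
    · constructor
      · exact le_trans (mul_nonneg (by linarith) hs2pos.le) hi1
      · linarith
    · exact ⟨hs2pos.le, hs2le⟩
  · -- cluster points
    intro sbar hcl
    obtain ⟨φ, hφ, hφt⟩ := TopologicalSpace.FirstCountableTopology.tendsto_subseq hcl
    exact key_lemma S0 S1 δ μ0 μ1 hS0 hS1 (ψseq ∘ φ) ψ (s ∘ φ)
      (fun k => hψmem (φ k)) hψ (hlim.comp hφ.tendsto_atTop)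
      (fun k => hs (φ k)) sbar hφt
  · -- closed graph
    apply IsSeqClosed.isClosed
    intro x p hx hxp
    exact key_lemma S0 S1 δ μ0 μ1 hS0 hS1 (fun k => ((x k).1 : ℝ × ℝ × ℝ)) p.1.val
      (fun k => (x k).2) (fun k => (x k).1.2) p.1.2
      (((continuous_subtype_val.comp continuous_fst).tendsto p).comp hxp)
      hx p.2 ((continuous_snd.tendsto p).comp hxp)
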